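/- Let b_0, …, b_n be positive integers, let N = b_0·b_1·⋯·b_n, and let K be the commutative ring that is free as an abelian group on γ_0, …, γ_n with multiplication γ_k·γ_m = (ℓ_k·ℓ_m/ℓ_{k+m}) γ_{k+m} for k + m ≤ n and γ_k·γ_m = 0 for k + m > n (unit γ_0). Then the ℤ-linear map K → ℤ[u]/⟨N·u^{n+1}⟩ sending γ_k ↦ ℓ_k·u^k for 0 ≤ k ≤ n is an injective ring homomorphism. (This is the natural map from Kawasaki's cohomology ring of the coarse moduli space ℂP^n_{(b)} to the cohomology ring of the orbifold [ℂP^n_{(b)}], determined by γ_1 ↦ ℓ_1·u = lcm(b_0,…,b_n)·u.) -/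

import Mathlib

open Polynomial

/-- `ell b k` is the number `ℓ_k` of Kawasaki: the least common multiple, over all
`(k+1)`-element subsets `{i_0 < ⋯ < i_k}` of `{0, …, n}`, of
`b_{i_0} ⋯ b_{i_k} / gcd(b_{i_0}, …, b_{i_k})`.  Note `ell b 0 = 1`. -/
def ell {n : ℕ} (b : Fin (n + 1) → ℕ) (k : ℕ) : ℕ :=
  ((Finset.univ : Finset (Fin (n + 1))).powersetCard (k + 1)).lcm
    (fun s => (∏ i ∈ s, b i) / s.gcd b)



lemma gcd_dvd_prod {n : ℕ} (b : Fin (n + 1) → ℕ) {s : Finset (Fin (n + 1))}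
    (hs : s.Nonempty) : s.gcd b ∣ ∏ i ∈ s, b i := by
  obtain ⟨i, hi⟩ := hs
  exact (Finset.gcd_dvd hi).trans (Finset.dvd_prod_of_mem b hi)

lemma gcd_pos {n : ℕ} {b : Fin (n + 1) → ℕ} (hb : ∀ i, 0 < b i)
    {s : Finset (Fin (n + 1))} (hs : s.Nonempty) : 0 < s.gcd b := by
  rcases Nat.eq_zero_or_pos (s.gcd b) with h | h
  · obtain ⟨i, hi⟩ := hs
    exact absurd (Finset.gcd_eq_zero_iff.mp h i hi) (hb i).ne'
  · exact h

lemma term_pos {n : ℕ} {b : Fin (n + 1) → ℕ} (hb : ∀ i, 0 < b i)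
    {s : Finset (Fin (n + 1))} (hs : s.Nonempty) : 0 < (∏ i ∈ s, b i) / s.gcd b :=
  Nat.div_pos (Nat.le_of_dvd (Finset.prod_pos fun i _ => hb i) (gcd_dvd_prod b hs))
    (gcd_pos hb hs)

lemma ell_pos {n : ℕ} {b : Fin (n + 1) → ℕ} (hb : ∀ i, 0 < b i) (k : ℕ) :
    0 < ell b k := by
  rcases Nat.eq_zero_or_pos (ell b k) with h | h
  · exfalso
    rw [ell, Finset.lcm_eq_zero_iff] at h
    obtain ⟨s, hmem, hs0⟩ := h
    rw [Finset.mem_powersetCard] at hmem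
    have : s.Nonempty := Finset.card_pos.mp (by omega)
    exact absurd hs0 (term_pos hb this).ne'
  · exact h

lemma prod_dvd_ell {n : ℕ} (b : Fin (n + 1) → ℕ) (hb : ∀ i, 0 < b i) {k : ℕ}
    (hk : k ≤ n) {A : Finset (Fin (n + 1))} (hA : A.card = k) :
    (∏ i ∈ A, b i) ∣ ell b k := by
  have hlt : A.card < Fintype.card (Fin (n + 1)) := by simp [hA]; omega
  obtain ⟨j, hj⟩ : ∃ j, j ∉ A := by
    by_contra h
    push_neg at h
    have : A = Finset.univ := Finset.eq_univ_iff_forall.mpr h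
    rw [this] at hlt
    simp at hlt
  set A' := insert j A with hA'
  have hcard : A'.card = k + 1 := by rw [Finset.card_insert_of_notMem hj, hA]
  have hmem : A' ∈ (Finset.univ : Finset (Fin (n+1))).powersetCard (k + 1) := by
    rw [Finset.mem_powersetCard]
    exact ⟨Finset.subset_univ _, hcard⟩
  have hdvd1 : (∏ i ∈ A, b i) ∣ (∏ i ∈ A', b i) / A'.gcd b := by
    have hprod : ∏ i ∈ A', b i = b j * ∏ i ∈ A, b i := Finset.prod_insert hj
    have hgb : A'.gcd b ∣ b j := Finset.gcd_dvd (Finset.mem_insert_self j A)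
    have hg0 : 0 < A'.gcd b := gcd_pos hb ⟨j, Finset.mem_insert_self j A⟩
    rw [hprod, mul_comm, Nat.mul_div_assoc _ hgb]
    exact dvd_mul_right _ _
  exact hdvd1.trans (Finset.dvd_lcm hmem)

lemma key_div {n : ℕ} {b : Fin (n + 1) → ℕ} (hb : ∀ i, 0 < b i)
    {S : Finset (Fin (n + 1))} (hS : S.Nonempty) {L : ℕ}
    (h : ∀ i ∈ S, (∏ j ∈ S.erase i, b j) ∣ L) :
    (∏ i ∈ S, b i) / S.gcd b ∣ L := by
  have hP : ∀ i ∈ S, (∏ j ∈ S, b j) ∣ b i * L := by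
    intro i hi
    have : ∏ j ∈ S, b j = b i * ∏ j ∈ S.erase i, b j :=
      (Finset.mul_prod_erase S b hi).symm
    rw [this]
    exact mul_dvd_mul_left _ (h i hi)
  have hgcd : (∏ j ∈ S, b j) ∣ S.gcd (fun i => b i * L) := Finset.dvd_gcd hP
  have heq : S.gcd (fun i => b i * L) = S.gcd b * L := by
    have h1 := Finset.gcd_mul_left (s := S) (f := b) (a := L)
    simp only [normalize_eq] at h1
    calc S.gcd (fun i => b i * L) = S.gcd (fun i => L * b i) := by
          simp only [mul_comm]
        _ = L * S.gcd b := h1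
        _ = S.gcd b * L := mul_comm _ _
  rw [heq] at hgcd
  have hg0 : 0 < S.gcd b := gcd_pos hb hS
  have hd : S.gcd b ∣ ∏ i ∈ S, b i := gcd_dvd_prod b hS
  rw [← Nat.mul_dvd_mul_iff_left hg0, Nat.mul_div_cancel' hd]
  calc (∏ i ∈ S, b i) ∣ S.gcd b * L := hgcd
    _ = S.gcd b * L := rfl

lemma ell_add_dvd {n : ℕ} {b : Fin (n + 1) → ℕ} (hb : ∀ i, 0 < b i) {k m : ℕ}
    (h : k + m ≤ n) : ell b (k + m) ∣ ell b k * ell b m := by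
  apply Finset.lcm_dvd
  intro S hSmem
  rw [Finset.mem_powersetCard] at hSmem
  obtain ⟨-, hScard⟩ := hSmem
  have hSne : S.Nonempty := Finset.card_pos.mp (by omega)
  apply key_div hb hSne
  intro i hi
  have hec : (S.erase i).card = k + m := by
    rw [Finset.card_erase_of_mem hi, hScard]
    omega
  obtain ⟨A, hAsub, hAcard⟩ := Finset.exists_subset_card_eq (show k ≤ (S.erase i).card by omega)
  have hBcard : ((S.erase i) \ A).card = m := by
    rw [Finset.card_sdiff_of_subset hAsub, hec, hAcard]
    omega
  have hsplit : ∏ j ∈ S.erase i, b j = (∏ j ∈ A, b j) * ∏ j ∈ (S.erase i) \ A, b j := by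
    rw [← Finset.prod_union (Finset.disjoint_sdiff), Finset.union_sdiff_of_subset hAsub]
  rw [hsplit]
  exact mul_dvd_mul (prod_dvd_ell b hb (by omega) hAcard)
    (prod_dvd_ell b hb (by omega) hBcard)

lemma N_dvd_ell_mul {n : ℕ} {b : Fin (n + 1) → ℕ} (hb : ∀ i, 0 < b i) {k m : ℕ}
    (hk : k ≤ n) (hm : m ≤ n) (h : n + 1 ≤ k + m) :
    (∏ i, b i) ∣ ell b k * ell b m := by
  obtain ⟨A, hAsub, hAcard⟩ := Finset.exists_subset_card_eq
    (show k ≤ (Finset.univ : Finset (Fin (n+1))).card by simp; omega)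
  have hAc : Aᶜ.card = n + 1 - k := by
    rw [Finset.card_compl, hAcard]; simp
  obtain ⟨B, hBsub, hBcard⟩ := Finset.exists_superset_card_eq (s := Aᶜ)
    (n := m) (by omega) (by simp; omega)
  have hcover : A ∪ B = Finset.univ := by
    apply Finset.eq_univ_of_forall
    intro i
    rcases em (i ∈ A) with hi | hi
    · exact Finset.mem_union_left _ hi
    · exact Finset.mem_union_right _ (hBsub (Finset.mem_compl.mpr hi))
  have : (∏ i, b i) ∣ (∏ i ∈ A, b i) * ∏ i ∈ B, b i := by
    rw [← Finset.prod_union_inter, hcover]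
    exact Dvd.intro _ rfl
  exact this.trans (mul_dvd_mul (prod_dvd_ell b hb hk hAcard) (prod_dvd_ell b hb hm hBcard))

lemma ell_zero {n : ℕ} {b : Fin (n + 1) → ℕ} (hb : ∀ i, 0 < b i) : ell b 0 = 1 := by
  rw [← Nat.dvd_one]
  apply Finset.lcm_dvd
  intro s hs
  rw [Finset.mem_powersetCard] at hs
  obtain ⟨-, hcard⟩ := hs
  obtain ⟨i, rfl⟩ := Finset.card_eq_one.mp hcard
  simp [Nat.div_self (hb i)]

/-- Kawasaki's multiplication on the free abelian group `ℤ^{n+1}` with basis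
`γ_0, …, γ_n`: `γ_k · γ_m = (ℓ_k ℓ_m / ℓ_{k+m}) γ_{k+m}` when `k + m ≤ n`,
and `γ_k · γ_m = 0` when `k + m > n`. -/
def kawasakiMul {n : ℕ} (b : Fin (n + 1) → ℕ) (x y : Fin (n + 1) → ℤ) :
    Fin (n + 1) → ℤ := fun j =>
  ∑ k : Fin (n + 1), ∑ m : Fin (n + 1),
    if (k : ℕ) + (m : ℕ) = (j : ℕ) then
      x k * y m * ((ell b k * ell b m) / ell b (k + m) : ℕ)
    else 0

set_option maxHeartbeats 1000000 in
/-- with `N = b_0 ⋯ b_n`, the ℤ-linear map from Kawasaki's ring `K`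
(free on `γ_0, …, γ_n` with the product above, unit `γ_0`) to
`ℤ[u]/⟨N u^{n+1}⟩` sending `γ_k ↦ ℓ_k u^k` is an injective ring homomorphism. -/
theorem kawasaki_to_orbifold_injective_ringHom {n : ℕ} (b : Fin (n + 1) → ℕ)
    (hb : ∀ i, 0 < b i) :
    ∀ I : Ideal (Polynomial ℤ),
      I = Ideal.span {Polynomial.C ((∏ i, b i : ℕ) : ℤ) * Polynomial.X ^ (n + 1)} →
    ∀ φ : (Fin (n + 1) → ℤ) → Polynomial ℤ ⧸ I,
      (φ = fun x => ∑ k : Fin (n + 1),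
        x k • Ideal.Quotient.mk I
          (Polynomial.C ((ell b k : ℕ) : ℤ) * Polynomial.X ^ (k : ℕ))) →
    Function.Injective φ ∧
    (∀ x y, φ (x + y) = φ x + φ y) ∧
    (∀ x y, φ (kawasakiMul b x y) = φ x * φ y) ∧
    φ (Pi.single 0 1) = 1 := by
  intro I hI φ hφ
  set NN : Polynomial ℤ := C ((∏ i, b i : ℕ) : ℤ) * X ^ (n + 1) with hNN
  set mk := Ideal.Quotient.mk I with hmk
  set q : ℕ → Polynomial ℤ ⧸ I := fun t => mk (C ((ell b t : ℕ) : ℤ) * X ^ t) with hq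
  have hφ' : ∀ x, φ x = ∑ k : Fin (n + 1), x k • q (k : ℕ) := by
    intro x; rw [hφ]
  set P : (Fin (n + 1) → ℤ) → Polynomial ℤ :=
    fun x => ∑ k : Fin (n + 1), C (x k) * (C ((ell b (k : ℕ) : ℕ) : ℤ) * X ^ (k : ℕ)) with hP
  have hmkP : ∀ x, φ x = mk (P x) := by
    intro x
    rw [hφ', hP, map_sum]
    refine Finset.sum_congr rfl fun k _ => ?_
    rw [map_mul, hq, zsmul_eq_mul, ← map_intCast mk (x k)]
    congr 1
  -- q at k m product
  have hqmul : ∀ k m : ℕ, q k * q m =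
      mk (C ((ell b k * ell b m : ℕ) : ℤ) * X ^ (k + m)) := by
    intro k m
    rw [hq, ← map_mul]
    congr 1
    rw [Nat.cast_mul, Polynomial.C_mul]
    ring
  -- vanishing beyond degree n
  have hvanish : ∀ k m : ℕ, k ≤ n → m ≤ n → n + 1 ≤ k + m →
      mk (C ((ell b k * ell b m : ℕ) : ℤ) * X ^ (k + m)) = 0 := by
    intro k m hk hm hkm
    rw [hmk, Ideal.Quotient.eq_zero_iff_mem, hI, Ideal.mem_span_singleton]
    refine ⟨C (((ell b k * ell b m) / (∏ i, b i) : ℕ) : ℤ) * X ^ (k + m - (n + 1)), ?_⟩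
    rw [hNN]
    rw [mul_mul_mul_comm, ← Polynomial.C_mul, ← pow_add]
    congr 2
    · rw [← Nat.cast_mul, Nat.mul_div_cancel' (N_dvd_ell_mul hb hk hm hkm)]
    · omega
  have hCsmul : ∀ (c : ℤ) (p : Polynomial ℤ), c • mk p = mk (C c * p) := by
    intro c p
    rw [← map_zsmul mk, zsmul_eq_mul]
    congr 1
  have hcoeffP : ∀ (x : Fin (n + 1) → ℤ) (k : Fin (n + 1)),
      (P x).coeff (k : ℕ) = x k * ((ell b (k : ℕ) : ℕ) : ℤ) := by
    intro x k
    rw [hP, Polynomial.finset_sum_coeff, Finset.sum_eq_single k]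
    · simp [Polynomial.coeff_C_mul, Polynomial.coeff_X_pow, mul_assoc]
    · intro j _ hj
      have : (j : ℕ) ≠ (k : ℕ) := fun h => hj (Fin.ext h)
      simp [Polynomial.coeff_C_mul, Polynomial.coeff_X_pow, Ne.symm this]
    · simp
  have hpair : ∀ k m : Fin (n + 1),
      (∑ j : Fin (n + 1), (if (k : ℕ) + (m : ℕ) = (j : ℕ) then
          (((ell b (k : ℕ) * ell b (m : ℕ)) / ell b ((k : ℕ) + (m : ℕ)) : ℕ) : ℤ)
        else 0) • q (j : ℕ)) = q (k : ℕ) * q (m : ℕ) := by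
    intro k m
    rw [hqmul]
    by_cases hkm : (k : ℕ) + (m : ℕ) ≤ n
    · have hlt : (k : ℕ) + (m : ℕ) < n + 1 := by omega
      rw [Finset.sum_eq_single (⟨(k : ℕ) + (m : ℕ), hlt⟩ : Fin (n + 1))]
      · rw [if_pos rfl, hq]
        simp only
        rw [hCsmul, ← mul_assoc, ← Polynomial.C_mul, ← Nat.cast_mul,
          Nat.div_mul_cancel (ell_add_dvd hb hkm)]
      · intro j _ hj
        rw [if_neg (fun hc => hj (Fin.ext hc.symm)), zero_smul]
      · simp
    · rw [hvanish (k : ℕ) (m : ℕ) (by omega) (by omega) (by omega)]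
      · apply Finset.sum_eq_zero
        intro j _
        have : ¬ ((k : ℕ) + (m : ℕ) = (j : ℕ)) := by have := j.isLt; omega
        rw [if_neg this, zero_smul]
  have hterm : ∀ (cnd : Prop) [Decidable cnd] (a c : ℤ) (r : Polynomial ℤ ⧸ I),
      (if cnd then a * c else 0) • r = a • ((if cnd then c else 0) • r) := by
    intro cnd _ a c r
    split <;> simp [mul_smul]
  refine ⟨?_, ?_, ?_, ?_⟩
  · -- injectivity
    intro x y hxy
    rw [hmkP, hmkP] at hxy
    have hmem : P x - P y ∈ I := by
      rwa [hmk, Ideal.Quotient.eq] at hxy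
    rw [hI, Ideal.mem_span_singleton, hNN] at hmem
    have hX : (X : Polynomial ℤ) ^ (n + 1) ∣ P x - P y := (dvd_mul_left _ _).trans hmem
    funext k
    have h0 := Polynomial.X_pow_dvd_iff.mp hX (k : ℕ) k.isLt
    rw [Polynomial.coeff_sub, hcoeffP, hcoeffP, sub_eq_zero] at h0
    have hne : ((ell b (k : ℕ) : ℕ) : ℤ) ≠ 0 := by
      exact_mod_cast (ell_pos hb (k : ℕ)).ne'
    exact mul_right_cancel₀ hne h0
  · -- additivity
    intro x y
    simp [hφ', add_smul, Finset.sum_add_distrib]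
  · -- multiplicativity
    intro x y
    rw [hφ', hφ', hφ']
    have hR : (∑ k : Fin (n + 1), x k • q (k : ℕ)) * (∑ m : Fin (n + 1), y m • q (m : ℕ))
        = ∑ k : Fin (n + 1), ∑ m : Fin (n + 1), (x k * y m) • (q (k : ℕ) * q (m : ℕ)) := by
      rw [Finset.sum_mul_sum]
      refine Finset.sum_congr rfl fun k _ => Finset.sum_congr rfl fun m _ => ?_
      rw [smul_mul_smul_comm]
    rw [hR]
    calc ∑ j : Fin (n + 1), kawasakiMul b x y j • q (j : ℕ)
        = ∑ j : Fin (n + 1), ∑ k : Fin (n + 1), ∑ m : Fin (n + 1),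
            (if (k : ℕ) + (m : ℕ) = (j : ℕ) then
              x k * y m * (((ell b (k : ℕ) * ell b (m : ℕ)) / ell b ((k : ℕ) + (m : ℕ)) : ℕ) : ℤ)
            else 0) • q (j : ℕ) := by
          refine Finset.sum_congr rfl fun j _ => ?_
          simp only [kawasakiMul]
          rw [Finset.sum_smul]
          exact Finset.sum_congr rfl fun k _ => Finset.sum_smul
      _ = ∑ k : Fin (n + 1), ∑ j : Fin (n + 1), ∑ m : Fin (n + 1),
            (if (k : ℕ) + (m : ℕ) = (j : ℕ) then
              x k * y m * (((ell b (k : ℕ) * ell b (m : ℕ)) / ell b ((k : ℕ) + (m : ℕ)) : ℕ) : ℤ)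
            else 0) • q (j : ℕ) := Finset.sum_comm
      _ = ∑ k : Fin (n + 1), ∑ m : Fin (n + 1), ∑ j : Fin (n + 1),
            (if (k : ℕ) + (m : ℕ) = (j : ℕ) then
              x k * y m * (((ell b (k : ℕ) * ell b (m : ℕ)) / ell b ((k : ℕ) + (m : ℕ)) : ℕ) : ℤ)
            else 0) • q (j : ℕ) := Finset.sum_congr rfl fun k _ => Finset.sum_comm
      _ = ∑ k : Fin (n + 1), ∑ m : Fin (n + 1), (x k * y m) • (q (k : ℕ) * q (m : ℕ)) := by
          refine Finset.sum_congr rfl fun k _ => Finset.sum_congr rfl fun m _ => ?_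
          rw [← hpair k m, Finset.smul_sum]
          exact Finset.sum_congr rfl fun j _ => (hterm _ _ _ _)
  · -- unit
    rw [hφ', Finset.sum_eq_single (0 : Fin (n + 1))]
    · have h0 : ((0 : Fin (n + 1)) : ℕ) = 0 := rfl
      rw [Pi.single_eq_same, one_smul, hq]
      simp only [h0, ell_zero hb]
      simp
    · intro j _ hj
      rw [Pi.single_eq_of_ne hj, zero_smul]
    · simp
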